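/- Let p be prime and F0 a nonempty proper subset of Z/pZ. Then the indicator function 1_{F0} is invertible in the convolution ring Q^{Z/pZ}: there exists g : Z/pZ → Q with g * 1_{F0} = δ_0. -/

import Mathlib

open Polynomial Finset

-- convolution formula for AddMonoidAlgebra over a finite group
lemma conv_apply {p : ℕ} [NeZero p] (f g : AddMonoidAlgebra ℚ (ZMod p)) (x : ZMod p) :
    (f * g).coeff x = ∑ y : ZMod p, f.coeff y * g.coeff (x - y) := by
  classical
  rw [AddMonoidAlgebra.coeff_mul]
  rw [Finsupp.sum_fintype _ _ (by intro a; simp [Finsupp.sum])]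
  refine Finset.sum_congr rfl fun a _ => ?_
  rw [Finsupp.sum_fintype _ _ (by intro a; simp)]
  rw [show (∑ a' : ZMod p, if a + a' = x then f.coeff a * g.coeff a' else 0)
      = ∑ a' : ZMod p, if a' = x - a then f.coeff a * g.coeff a' else 0 from by
    refine Finset.sum_congr rfl fun a' _ => ?_
    congr 1
    simp [eq_sub_iff_add_eq, add_comm, eq_iff_iff]]
  simp

theorem stmt_14 (p : ℕ) [Fact p.Prime] (F0 : Finset (ZMod p))
    (hne : F0.Nonempty) (hproper : F0 ≠ Finset.univ) :
    ∃ g : ZMod p → ℚ,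
      ∀ x : ZMod p,
        (∑ y : ZMod p, g y * (if x - y ∈ F0 then (1 : ℚ) else 0)) =
          (if x = 0 then (1 : ℚ) else 0) := by
  classical
  have hp : p.Prime := Fact.out
  have hp1 : 1 < p := hp.one_lt
  set P : ℚ[X] := ∑ a ∈ F0, X ^ (a.val) with hPdef
  -- coefficients of P
  have hcoeff : ∀ n : ℕ, P.coeff n = if ∃ a ∈ F0, a.val = n then 1 else 0 := by
    intro n
    rw [hPdef, finset_sum_coeff]
    simp only [coeff_X_pow]
    by_cases h : ∃ a ∈ F0, a.val = n
    · obtain ⟨a, haF, ha⟩ := h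
      rw [Finset.sum_eq_single a, if_pos ha.symm, if_pos ⟨a, haF, ha⟩]
      · intro b hb hba
        rw [if_neg]
        intro hnb
        exact hba (ZMod.val_injective p ((hnb.symm.trans ha.symm : b.val = a.val)))
      · intro h'; exact absurd haF h'
    · rw [if_neg h]
      refine Finset.sum_eq_zero fun a ha => ?_
      rw [if_neg]
      intro hna
      exact h ⟨a, ha, hna.symm⟩
  have hPne : P ≠ 0 := by
    obtain ⟨a, ha⟩ := hne
    intro h
    have := hcoeff a.val
    rw [h, coeff_zero, if_pos ⟨a, ha, rfl⟩] at this
    norm_num at this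
  -- P is coprime to X - 1
  have hcop1 : IsCoprime P (X - 1 : ℚ[X]) := by
    rw [show (X - 1 : ℚ[X]) = X - C 1 from by simp, isCoprime_comm]
    rw [(irreducible_X_sub_C (1:ℚ)).coprime_iff_not_dvd]
    intro hdvd
    have : P.eval 1 = 0 := by
      have := Polynomial.eval_dvd (x := (1:ℚ)) hdvd
      simpa using this
    rw [hPdef] at this
    simp only [eval_finset_sum, eval_pow, eval_X, one_pow] at this
    rw [Finset.sum_const, nsmul_eq_mul, mul_one] at this
    exact absurd this (by exact_mod_cast Finset.card_ne_zero_of_mem hne.choose_spec)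
  -- P is coprime to cyclotomic p
  have hdegP : P.natDegree ≤ p - 1 := by
    refine (Polynomial.natDegree_sum_le _ _).trans ?_
    rw [Finset.fold_max_le]
    refine ⟨Nat.zero_le _, fun a _ => ?_⟩
    simp only [Function.comp_apply, natDegree_X_pow]
    exact Nat.le_sub_one_of_lt (ZMod.val_lt a)
  have hcop2 : IsCoprime P (cyclotomic p ℚ) := by
    rw [isCoprime_comm, (cyclotomic.irreducible_rat hp.pos).coprime_iff_not_dvd]
    rintro ⟨q, hq⟩
    have hqne : q ≠ 0 := by rintro rfl; simp [hq] at hPne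
    have hdegΦ : (cyclotomic p ℚ).natDegree = p - 1 := by
      rw [natDegree_cyclotomic, Nat.totient_prime hp]
    have hdq : q.natDegree = 0 := by
      have := Polynomial.natDegree_mul (cyclotomic_ne_zero p ℚ) hqne
      rw [← hq, hdegΦ] at this
      omega
    obtain ⟨c, rfl⟩ := Polynomial.natDegree_eq_zero.mp hdq
    have hcoeffΦ : ∀ n : ℕ, n < p → (cyclotomic p ℚ).coeff n = 1 := by
      intro n hn
      rw [cyclotomic_prime, finset_sum_coeff]
      simp only [coeff_X_pow]
      rw [Finset.sum_eq_single n (fun b _ hbn => if_neg fun h => hbn h.symm)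
        (fun hn' => absurd (Finset.mem_range.mpr hn) hn'), if_pos rfl]
    have key : ∀ a : ZMod p, P.coeff a.val = c := by
      intro a
      rw [hq, coeff_mul_C, hcoeffΦ a.val (ZMod.val_lt a), one_mul]
    obtain ⟨a0, ha0⟩ := hne
    obtain ⟨a1, ha1⟩ : ∃ a, a ∉ F0 := by
      by_contra h
      push_neg at h
      exact hproper (Finset.eq_univ_of_forall h)
    have h0 : P.coeff a0.val = 1 := by
      rw [hcoeff]; exact if_pos ⟨a0, ha0, rfl⟩
    have h1 : P.coeff a1.val = 0 := by
      rw [hcoeff, if_neg]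
      rintro ⟨b, hb, hval⟩
      exact ha1 (ZMod.val_injective p hval ▸ hb)
    rw [key a0] at h0; rw [key a1] at h1
    rw [h1] at h0; norm_num at h0
  -- Bezout
  have hcop : IsCoprime P (X ^ p - 1 : ℚ[X]) := by
    have : (X ^ p - 1 : ℚ[X]) = cyclotomic p ℚ * (X - 1) := by
      rw [cyclotomic_prime, geom_sum_mul]
    rw [this]
    exact hcop2.mul_right hcop1
  obtain ⟨A, B, hAB⟩ := hcop
  -- map to AddMonoidAlgebra
  let φ : ℚ[X] →+* AddMonoidAlgebra ℚ (ZMod p) :=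
    (AddMonoidAlgebra.mapDomainRingHom ℚ (Nat.castAddMonoidHom (ZMod p))).comp
      (Polynomial.toFinsuppIso ℚ).toRingHom
  have hφpow : ∀ n : ℕ, φ (X ^ n) = AddMonoidAlgebra.single (n : ZMod p) (1 : ℚ) := by
    intro n
    show AddMonoidAlgebra.mapDomainRingHom ℚ (Nat.castAddMonoidHom (ZMod p))
        ((X ^ n : ℚ[X]).toFinsupp) = _
    rw [toFinsupp_X_pow]
    exact AddMonoidAlgebra.mapDomain_single
  have hφP : φ P = ∑ a ∈ F0, AddMonoidAlgebra.single a (1 : ℚ) := by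
    rw [hPdef, map_sum]
    refine Finset.sum_congr rfl fun a _ => ?_
    rw [hφpow, ZMod.natCast_val, ZMod.cast_id]
  have hφX : φ (X ^ p - 1 : ℚ[X]) = 0 := by
    rw [map_sub, hφpow, map_one]
    rw [ZMod.natCast_self]
    rw [show ((1 : AddMonoidAlgebra ℚ (ZMod p))) = AddMonoidAlgebra.single 0 1 from rfl]
    simp
  have hu : φ A * φ P = 1 := by
    have := congrArg φ hAB
    rw [map_add, map_mul, map_mul, hφX, mul_zero, add_zero, map_one] at this
    exact this
  refine ⟨fun y => (φ A).coeff y, fun x => ?_⟩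
  have hPval : ∀ z : ZMod p, (φ P).coeff z = if z ∈ F0 then (1:ℚ) else 0 := by
    intro z
    rw [hφP, AddMonoidAlgebra.coeff_sum, Finsupp.finset_sum_apply]
    simp only [AddMonoidAlgebra.coeff_single, Finsupp.single_apply]
    exact Finset.sum_ite_eq' F0 z (fun _ => (1:ℚ))
  calc (∑ y : ZMod p, (φ A).coeff y * (if x - y ∈ F0 then (1 : ℚ) else 0))
      = ∑ y : ZMod p, (φ A).coeff y * (φ P).coeff (x - y) := by
        refine Finset.sum_congr rfl fun y _ => by rw [hPval]
    _ = (φ A * φ P).coeff x := (conv_apply _ _ _).symm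
    _ = (1 : AddMonoidAlgebra ℚ (ZMod p)).coeff x := by rw [hu]
    _ = if x = 0 then 1 else 0 := by
        rw [show ((1 : AddMonoidAlgebra ℚ (ZMod p))) = AddMonoidAlgebra.single 0 1 from rfl,
          AddMonoidAlgebra.coeff_single, Finsupp.single_apply]
        simp [eq_comm]
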